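/- arXiv:1501.02781 — 2 statements merged into one kernel-verified Lean document; each statement's English description precedes it below -/
import Mathlib

section
/- Define \tilde\Omega(R e^{i\theta}) = (T(R^{-2}-1)/(1-t^2)) (t^2 - R^2 + (R^2-1) t \cos(2\theta)) - 2T\log R for R > \sqrt t and 0<t<1, T>0. Then \tilde\Omega(Re^{i\theta}) \ge 0 with equality if and only if R = 1. -/
open Real Set

noncomputable def fjk (t : ℝ) : ℝ → ℝ :=
  fun x => (x + t - 1 - t * x⁻¹) / (1 + t) - Real.log x

lemma fjk_hasDeriv (t : ℝ) (ht : 0 < t) {x : ℝ} (hx : 0 < x) :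
    HasDerivAt (fjk t) ((x - 1) * (x - t) / ((1 + t) * x ^ 2)) x := by
  have hx0 : x ≠ 0 := hx.ne'
  have h1 : HasDerivAt (fun y : ℝ => (y + t - 1 - t * y⁻¹) / (1 + t) - Real.log y)
      ((1 - t * (-(x ^ 2)⁻¹)) / (1 + t) - x⁻¹) x := by
    exact (((((hasDerivAt_id x).add_const t).sub_const 1).sub
      ((hasDerivAt_inv hx0).const_mul t)).div_const (1 + t)).sub (Real.hasDerivAt_log hx0)
  convert h1 using 1
  · rfl
  have ht1 : (1 : ℝ) + t ≠ 0 := by positivity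
  field_simp
  ring

lemma fjk_one (t : ℝ) (ht : 0 < t) : fjk t 1 = 0 := by
  simp [fjk]

lemma fjk_pos (t : ℝ) (ht0 : 0 < t) (ht1 : t < 1) {x : ℝ} (hx : t < x) (hx1 : x ≠ 1) :
    0 < fjk t x := by
  have h1t : (0:ℝ) < 1 + t := by linarith
  rcases lt_or_gt_of_ne hx1 with h | h
  · -- x < 1 : strictly decreasing on [t,1]
    have anti : StrictAntiOn (fjk t) (Set.Icc t 1) := by
      apply strictAntiOn_of_deriv_neg (convex_Icc t 1)
      · intro y hy
        exact (fjk_hasDeriv t ht0 (lt_of_lt_of_le ht0 hy.1)).continuousAt.continuousWithinAt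
      · intro y hy
        rw [interior_Icc] at hy
        have hy0 : 0 < y := lt_trans ht0 hy.1
        rw [(fjk_hasDeriv t ht0 hy0).deriv]
        apply div_neg_of_neg_of_pos
        · nlinarith [hy.1, hy.2]
        · positivity
    have := anti ⟨hx.le, h.le⟩ ⟨ht1.le, le_refl 1⟩ h
    rw [fjk_one t ht0] at this
    linarith
  · -- x > 1 : strictly increasing on [1,∞)
    have mono : StrictMonoOn (fjk t) (Set.Ici 1) := by
      apply strictMonoOn_of_deriv_pos (convex_Ici 1)
      · intro y hy
        exact (fjk_hasDeriv t ht0 (lt_of_lt_of_le one_pos hy)).continuousAt.continuousWithinAt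
      · intro y hy
        rw [interior_Ici, Set.mem_Ioi] at hy
        have hy0 : (0:ℝ) < y := lt_trans one_pos hy
        rw [(fjk_hasDeriv t ht0 hy0).deriv]
        apply div_pos
        · exact mul_pos (by linarith) (by linarith)
        · positivity
    have := mono (Set.self_mem_Ici) (Set.mem_Ici.mpr h.le) h
    rw [fjk_one t ht0] at this
    linarith

/-- The effective potential in Joukowsky coordinates,
`Ω̃(Re^{iθ}) = (T(R⁻²-1)/(1-t²))(t² - R² + (R²-1)t cos 2θ) - 2T log R`,
is nonnegative on `{R > √t}`, with equality if and only if `R = 1`. -/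
theorem stmt13 (t T : ℝ) (ht0 : 0 < t) (ht1 : t < 1) (hT : 0 < T)
    (R θ : ℝ) (hR : Real.sqrt t < R) :
    0 ≤ T * (R⁻¹ ^ 2 - 1) / (1 - t ^ 2)
          * (t ^ 2 - R ^ 2 + (R ^ 2 - 1) * t * Real.cos (2 * θ)) - 2 * T * Real.log R ∧
    (T * (R⁻¹ ^ 2 - 1) / (1 - t ^ 2)
          * (t ^ 2 - R ^ 2 + (R ^ 2 - 1) * t * Real.cos (2 * θ)) - 2 * T * Real.log R = 0
      ↔ R = 1) := by
  have hRpos : 0 < R := lt_of_le_of_lt (Real.sqrt_nonneg t) hR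
  have hxt : t < R ^ 2 := by
    nlinarith [Real.sq_sqrt ht0.le, Real.sqrt_nonneg t]
  have hR0 : R ≠ 0 := hRpos.ne'
  have h1t : (0:ℝ) < 1 + t := by linarith
  have h1t' : (0:ℝ) < 1 - t := by linarith
  have hx0 : (0:ℝ) < R ^ 2 := by positivity
  set K : ℝ := T * t * (R ^ 2 - 1) ^ 2 / (R ^ 2 * (1 - t ^ 2)) with hK
  have hEq : T * (R⁻¹ ^ 2 - 1) / (1 - t ^ 2)
          * (t ^ 2 - R ^ 2 + (R ^ 2 - 1) * t * Real.cos (2 * θ)) - 2 * T * Real.log R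
      = T * fjk t (R ^ 2) + K * (1 - Real.cos (2 * θ)) := by
    have hlog : Real.log (R ^ 2) = 2 * Real.log R := by
      rw [Real.log_pow]; push_cast; ring
    simp only [fjk, hK, hlog]
    have h2 : (1:ℝ) - t ^ 2 ≠ 0 := by nlinarith
    field_simp
    ring
  have hKnn : 0 ≤ K := by
    apply div_nonneg
    · positivity
    · exact mul_nonneg hx0.le (by nlinarith)
  have hcos : 0 ≤ 1 - Real.cos (2 * θ) := by
    have := Real.cos_le_one (2 * θ); linarith
  have hfnn : 0 ≤ fjk t (R ^ 2) := by
    rcases eq_or_ne (R ^ 2) 1 with h | h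
    · rw [h, fjk_one t ht0]
    · exact (fjk_pos t ht0 ht1 hxt h).le
  constructor
  · rw [hEq]
    have : 0 ≤ K * (1 - Real.cos (2 * θ)) := mul_nonneg hKnn hcos
    nlinarith
  · constructor
    · intro hE
      rw [hEq] at hE
      have h1 : 0 ≤ T * fjk t (R ^ 2) := mul_nonneg hT.le hfnn
      have h2 : 0 ≤ K * (1 - Real.cos (2 * θ)) := mul_nonneg hKnn hcos
      have hf0 : T * fjk t (R ^ 2) = 0 := by linarith
      have hf0' : fjk t (R ^ 2) = 0 := by
        rcases mul_eq_zero.mp hf0 with h | h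
        · exact absurd h hT.ne'
        · exact h
      have hx1 : R ^ 2 = 1 := by
        by_contra h
        exact absurd hf0' (fjk_pos t ht0 ht1 hxt h).ne'
      have : (R - 1) * (R + 1) = 0 := by nlinarith
      rcases mul_eq_zero.mp this with h | h
      · linarith
      · linarith
    · intro h
      subst h
      rw [hEq]
      simp [fjk_one t ht0, hK]
end

section
/- Let p_j, j\ge 0, be polynomials with complex coefficients satisfying the recurrences z p_k = r_{k+1} p_{k+1} + t r_k p_{k-1} and (1/N)\partial_z(p_k e^{Ntz^2/2}) = (t r_{k+1} p_{k+1} + r_k p_{k-1}) e^{Ntz^2/2}, with r_k=\sqrt{k/(N(1-t^2))}, p_{-1}=0. Define \mathcal{K}_n(z,w) = \sum_{j=0}^{n-1} p_j(z)\overline{p_j(w)} \exp(-N(z\bar w - (t/2)z^2 - (t/2)\bar w^2)). Then (1/N)\,\partial_z \mathcal{K}_n(z,w) = \sqrt{T/(1-t^2)}\,(t\, p_n(z)\overline{p_{n-1}(w)} - p_{n-1}(z)\overline{p_n(w)})\exp(-N(z\bar w - (t/2)z^2 - (t/2)\bar w^2)), where T = n/N. -/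
open scoped ComplexConjugate

/-- Christoffel–Darboux type identity for the pre-kernel. Let `p_j` be polynomials
satisfying the recurrences `z p_k = r_{k+1} p_{k+1} + t r_k p_{k-1}` and
`(1/N) ∂_z (p_k e^{Ntz²/2}) = (t r_{k+1} p_{k+1} + r_k p_{k-1}) e^{Ntz²/2}`,
with `r_k = √(k/(N(1-t²)))` (so `r_0 = 0`, accommodating `p_{-1} = 0`).
With `𝒦_n(z,w) = ∑_{j<n} p_j(z) conj(p_j(w)) exp(-N(z w̄ - (t/2)z² - (t/2)w̄²))`,
one has `(1/N) ∂_z 𝒦_n(z,w) = √(T/(1-t²)) (t p_n(z) conj(p_{n-1}(w))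
 - p_{n-1}(z) conj(p_n(w))) exp(-N(z w̄ - (t/2)z² - (t/2)w̄²))`, `T = n/N`. -/
theorem stmt17 (t N : ℝ) (ht0 : 0 ≤ t) (ht1 : t < 1) (hN : 0 < N)
    (p : ℕ → Polynomial ℂ)
    (r : ℕ → ℝ) (hr : ∀ k : ℕ, r k = Real.sqrt (k / (N * (1 - t ^ 2))))
    (hrec1 : ∀ (k : ℕ) (z : ℂ), z * (p k).eval z
      = ((r (k + 1) : ℝ) : ℂ) * (p (k + 1)).eval z
        + (t : ℂ) * ((r k : ℝ) : ℂ) * (p (k - 1)).eval z)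
    (hrec2 : ∀ (k : ℕ) (z : ℂ),
      (1 / (N : ℂ)) * deriv (fun z : ℂ => (p k).eval z * Complex.exp ((N : ℂ) * t * z ^ 2 / 2)) z
      = ((t : ℂ) * ((r (k + 1) : ℝ) : ℂ) * (p (k + 1)).eval z
          + ((r k : ℝ) : ℂ) * (p (k - 1)).eval z) * Complex.exp ((N : ℂ) * t * z ^ 2 / 2))
    (n : ℕ) (hn : 0 < n) (T : ℝ) (hT : T = n / N) (w z : ℂ) :
    (1 / (N : ℂ)) * deriv (fun z : ℂ => ∑ j ∈ Finset.range n,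
        (p j).eval z * conj ((p j).eval w)
          * Complex.exp (-(N : ℂ) * (z * conj w - (t : ℂ) / 2 * z ^ 2
              - (t : ℂ) / 2 * (conj w) ^ 2))) z
      = ((Real.sqrt (T / (1 - t ^ 2)) : ℝ) : ℂ)
        * ((t : ℂ) * (p n).eval z * conj ((p (n - 1)).eval w)
            - (p (n - 1)).eval z * conj ((p n).eval w))
        * Complex.exp (-(N : ℂ) * (z * conj w - (t : ℂ) / 2 * z ^ 2
            - (t : ℂ) / 2 * (conj w) ^ 2)) := by
  have hNz : (N : ℂ) ≠ 0 := Complex.ofReal_ne_zero.mpr hN.ne'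
  have hexp : ∀ x : ℂ,
      Complex.exp (-(N : ℂ) * (x * conj w - (t : ℂ) / 2 * x ^ 2 - (t : ℂ) / 2 * (conj w) ^ 2))
        = Complex.exp ((N : ℂ) * t * x ^ 2 / 2) * Complex.exp (-(N : ℂ) * conj w * x)
          * Complex.exp ((N : ℂ) * t * (conj w) ^ 2 / 2) := by
    intro x
    rw [← Complex.exp_add, ← Complex.exp_add]
    congr 1
    ring
  have hrecw : ∀ j : ℕ, conj w * conj ((p j).eval w)
      = ((r (j + 1) : ℝ) : ℂ) * conj ((p (j + 1)).eval w)
        + (t : ℂ) * ((r j : ℝ) : ℂ) * conj ((p (j - 1)).eval w) := by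
    intro j
    have h := congrArg conj (hrec1 j w)
    simpa [map_mul, map_add, Complex.conj_ofReal] using h
  set A : ℕ → ℂ := fun j => ((r j : ℝ) : ℂ)
      * ((t : ℂ) * (p j).eval z * conj ((p (j - 1)).eval w)
          - (p (j - 1)).eval z * conj ((p j).eval w)) with hA
  have hder : ∀ j : ℕ, HasDerivAt (fun x : ℂ => (p j).eval x * conj ((p j).eval w)
        * Complex.exp (-(N : ℂ) * (x * conj w - (t : ℂ) / 2 * x ^ 2
            - (t : ℂ) / 2 * (conj w) ^ 2)))
      ((N : ℂ) * Complex.exp ((N : ℂ) * t * z ^ 2 / 2) * Complex.exp (-(N : ℂ) * conj w * z)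
        * Complex.exp ((N : ℂ) * t * (conj w) ^ 2 / 2) * (A (j + 1) - A j)) z := by
    intro j
    have hGdiff : DifferentiableAt ℂ
        (fun x : ℂ => (p j).eval x * Complex.exp ((N : ℂ) * t * x ^ 2 / 2)) z := by
      apply DifferentiableAt.mul
      · exact (p j).differentiableAt
      · apply DifferentiableAt.cexp
        fun_prop
    have hG := hGdiff.hasDerivAt
    have hGval : deriv (fun x : ℂ => (p j).eval x * Complex.exp ((N : ℂ) * t * x ^ 2 / 2)) z
        = (N : ℂ) * (((t : ℂ) * ((r (j + 1) : ℝ) : ℂ) * (p (j + 1)).eval z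
            + ((r j : ℝ) : ℂ) * (p (j - 1)).eval z)
              * Complex.exp ((N : ℂ) * t * z ^ 2 / 2)) := by
      have h2 := hrec2 j z
      field_simp at h2
      linear_combination h2
    have hlin : HasDerivAt (fun x : ℂ => -(N : ℂ) * conj w * x) (-(N : ℂ) * conj w) z := by
      simpa using (hasDerivAt_id z).const_mul (-(N : ℂ) * conj w)
    have hH := hlin.cexp
    have hcomb := (hG.mul hH).mul_const
      (conj ((p j).eval w) * Complex.exp ((N : ℂ) * t * (conj w) ^ 2 / 2))
    have heq : (fun x : ℂ => (p j).eval x * conj ((p j).eval w)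
        * Complex.exp (-(N : ℂ) * (x * conj w - (t : ℂ) / 2 * x ^ 2
            - (t : ℂ) / 2 * (conj w) ^ 2)))
        = fun x : ℂ => ((p j).eval x * Complex.exp ((N : ℂ) * t * x ^ 2 / 2)
            * Complex.exp (-(N : ℂ) * conj w * x))
          * (conj ((p j).eval w) * Complex.exp ((N : ℂ) * t * (conj w) ^ 2 / 2)) := by
      funext x
      rw [hexp x]
      ring
    rw [heq]
    refine hcomb.congr_deriv ?_
    symm
    rw [hGval, hA]
    simp only [Nat.add_sub_cancel]
    linear_combination ((N : ℂ) * Complex.exp ((N : ℂ) * t * z ^ 2 / 2)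
      * Complex.exp (-(N : ℂ) * conj w * z) * Complex.exp ((N : ℂ) * t * (conj w) ^ 2 / 2)
      * (p j).eval z) * hrecw j
  have hsum := HasDerivAt.fun_sum (fun j (_ : j ∈ Finset.range n) => hder j)
  rw [hsum.deriv]
  have hA0 : A 0 = 0 := by
    simp [hA, hr 0]
  have htel : ∑ j ∈ Finset.range n, ((N : ℂ) * Complex.exp ((N : ℂ) * t * z ^ 2 / 2)
      * Complex.exp (-(N : ℂ) * conj w * z) * Complex.exp ((N : ℂ) * t * (conj w) ^ 2 / 2)
      * (A (j + 1) - A j))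
      = (N : ℂ) * Complex.exp ((N : ℂ) * t * z ^ 2 / 2) * Complex.exp (-(N : ℂ) * conj w * z)
        * Complex.exp ((N : ℂ) * t * (conj w) ^ 2 / 2) * A n := by
    rw [← Finset.mul_sum, Finset.sum_range_sub, hA0, sub_zero]
  rw [htel]
  have hrn : ((r n : ℝ) : ℂ) = ((Real.sqrt (T / (1 - t ^ 2)) : ℝ) : ℂ) := by
    rw [hr n, hT, div_div]
  rw [hexp z, hA, ← hrn]
  field_simp
end
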